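/- The reversed counting language over the alphabet {0,1,#,∘}, namely { (n)₂ʳ ∘ (n)₂ # (n−1)₂ʳ ∘ (n−1)₂ # ⋯ # (0)₂ʳ ∘ (0)₂ # : n ≥ 0 }, is recognised by some total parsing expression grammar; that is, it is in PEG. -/

import Mathlib

/-! ## Parsing expression grammars -/

/-- Parsing expressions over terminal alphabet `α` and non-terminal alphabet `ν`. -/
inductive PExp (α : Type) (ν : Type) : Type where
  | eps : PExp α ν
  | fail : PExp α ν
  | term (a : α) : PExp α ν
  | nt (A : ν) : PExp α ν
  | notP (e : PExp α ν) : PExp α ν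
  | andP (e : PExp α ν) : PExp α ν
  | seq (e₁ e₂ : PExp α ν) : PExp α ν
  | choice (e₁ e₂ : PExp α ν) : PExp α ν

/-- Big-step semantics of the recognition map `Rec` of a PEG with rules `R`:
`PegRec R e x r` holds iff `Rec(e,x)` is defined and equals `r`, where
`r = none` codes `FAIL` and `r = some y` codes the consumed prefix `y` of `x`. -/
inductive PegRec {α ν : Type} (R : ν → PExp α ν) :
    PExp α ν → List α → Option (List α) → Prop where
  | eps (x : List α) : PegRec R .eps x (some [])
  | fail (x : List α) : PegRec R .fail x none
  | termOk (a : α) (z : List α) : PegRec R (.term a) (a :: z) (some [a])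
  | termMismatch (a b : α) (z : List α) (h : a ≠ b) : PegRec R (.term a) (b :: z) none
  | termNil (a : α) : PegRec R (.term a) [] none
  | notFail (e : PExp α ν) (x : List α) :
      PegRec R e x none → PegRec R (.notP e) x (some [])
  | notSucc (e : PExp α ν) (x y : List α) :
      PegRec R e x (some y) → PegRec R (.notP e) x none
  | andSucc (e : PExp α ν) (x y : List α) :
      PegRec R e x (some y) → PegRec R (.andP e) x (some [])
  | andFail (e : PExp α ν) (x : List α) :
      PegRec R e x none → PegRec R (.andP e) x none
  | seqOk (e₁ e₂ : PExp α ν) (y₁ z y₂ : List α) :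
      PegRec R e₁ (y₁ ++ z) (some y₁) → PegRec R e₂ z (some y₂) →
      PegRec R (.seq e₁ e₂) (y₁ ++ z) (some (y₁ ++ y₂))
  | seqFail₁ (e₁ e₂ : PExp α ν) (x : List α) :
      PegRec R e₁ x none → PegRec R (.seq e₁ e₂) x none
  | seqFail₂ (e₁ e₂ : PExp α ν) (y₁ z : List α) :
      PegRec R e₁ (y₁ ++ z) (some y₁) → PegRec R e₂ z none →
      PegRec R (.seq e₁ e₂) (y₁ ++ z) none
  | choice₁ (e₁ e₂ : PExp α ν) (x y : List α) :
      PegRec R e₁ x (some y) → PegRec R (.choice e₁ e₂) x (some y)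
  | choice₂ (e₁ e₂ : PExp α ν) (x : List α) (r : Option (List α)) :
      PegRec R e₁ x none → PegRec R e₂ x r → PegRec R (.choice e₁ e₂) x r
  | ntRule (A : ν) (x : List α) (r : Option (List α)) :
      PegRec R (R A) x r → PegRec R (.nt A) x r

/-- A parsing expression grammar over the (finite) terminal alphabet `α`:
a finite alphabet `ν` of non-terminals, a rule for each non-terminal,
and a starting non-terminal. -/
structure PEG (α : Type) : Type 1 where
  ν : Type
  finNT : Finite ν
  R : ν → PExp α ν
  S : ν

/-- A PEG is total if its recognition map is total (defined on every expression and input). -/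
def PEG.Total {α : Type} (G : PEG α) : Prop :=
  ∀ (e : PExp α G.ν) (x : List α), ∃ r, PegRec G.R e x r

/-- The language recognised by a PEG: strings on which the starting
non-terminal succeeds and consumes the whole input. -/
def PEG.Lang {α : Type} (G : PEG α) : Set (List α) :=
  { x | PegRec G.R (.nt G.S) x (some x) }

/-- A language is in the class `PEG` iff some total parsing expression grammar recognises it. -/
def IsPEGLang {α : Type} (L : Set (List α)) : Prop :=
  ∃ G : PEG α, G.Total ∧ G.Lang = L

/-- The four-symbol alphabet `{0, 1, #, ∘}` of the counting language. -/
inductive CSym : Type where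
  | b0 : CSym   -- the bit 0
  | b1 : CSym   -- the bit 1
  | hash : CSym -- the outer separator #
  | circ : CSym -- the inner separator ∘
  deriving DecidableEq

/-- The shortest (most-significant-bit-first) binary representation `(n)₂`
of a natural number, as a list of booleans; by convention `(0)₂ = "0"`. -/
def natBin (n : ℕ) : List Bool :=
  if n = 0 then [false] else (Nat.bits n).reverse

/-- A list of bits as a string over `CSym`. -/
def bitsToCSym (w : List Bool) : List CSym :=
  w.map (fun b => if b then CSym.b1 else CSym.b0)

/-- The block `(n)₂ʳ ∘ (n)₂ #` of the reversed counting language. -/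
def countBlock (n : ℕ) : List CSym :=
  bitsToCSym (natBin n).reverse ++ [CSym.circ] ++ bitsToCSym (natBin n) ++ [CSym.hash]

namespace RCP

open List

/-- value of an LSB-first bit list -/
def valL : List Bool → ℕ
  | [] => 0
  | b :: l => (cond b 1 0) + 2 * valL l

theorem valL_bits : ∀ n : ℕ, valL n.bits = n := by
  intro n
  induction n using Nat.strong_induction_on with
  | _ n ih =>
    rcases Nat.eq_zero_or_pos n with h | h
    · subst h; simp [Nat.zero_bits, valL]
    rcases Nat.even_or_odd n with ⟨m, hm⟩ | ⟨m, hm⟩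
    · have hm0 : m ≠ 0 := by omega
      have : n.bits = false :: m.bits := by
        rw [hm, show m + m = 2 * m by ring, Nat.bit0_bits m hm0]
      rw [this, valL, ih m (by omega)]; simp; omega
    · have : n.bits = true :: m.bits := by rw [hm, Nat.bit1_bits]
      rw [this, valL, ih m (by omega)]; simp; omega

theorem bits_ends_true : ∀ n : ℕ, n ≠ 0 → ∃ l, n.bits = l ++ [true] := by
  intro n
  induction n using Nat.strong_induction_on with
  | _ n ih =>
    intro hn
    rcases Nat.even_or_odd n with ⟨m, hm⟩ | ⟨m, hm⟩
    · have hm0 : m ≠ 0 := by omega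
      obtain ⟨l, hl⟩ := ih m (by omega) hm0
      exact ⟨false :: l, by
        rw [hm, show m + m = 2 * m by ring, Nat.bit0_bits m hm0, hl]; simp⟩
    · rcases Nat.eq_zero_or_pos m with h0 | h0
      · refine ⟨[], ?_⟩
        rw [hm, h0]; simpa using Nat.one_bits
      · obtain ⟨l, hl⟩ := ih m (by omega) (by omega)
        exact ⟨true :: l, by rw [hm, Nat.bit1_bits, hl]; simp⟩

theorem bits_of_valL : ∀ l : List Bool, (valL (l ++ [true])).bits = l ++ [true] := by
  intro l
  induction l with
  | nil => simpa [valL] using Nat.one_bits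
  | cons b t ih =>
    have hpos : valL (t ++ [true]) ≠ 0 := by
      intro h
      have := ih
      rw [h] at this
      simp [Nat.zero_bits] at this
    cases b
    · have h2 : valL ((false :: t) ++ [true]) = 2 * valL (t ++ [true]) := by
        show (cond false 1 0) + 2 * valL (t ++ [true]) = _
        simp
      rw [h2, Nat.bit0_bits _ hpos, ih]; simp
    · have h2 : valL ((true :: t) ++ [true]) = 2 * valL (t ++ [true]) + 1 := by
        show (cond true 1 0) + 2 * valL (t ++ [true]) = _
        simp; ring
      rw [h2, Nat.bit1_bits, ih]; simp

theorem valL_append (l₁ l₂ : List Bool) :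
    valL (l₁ ++ l₂) = valL l₁ + 2 ^ l₁.length * valL l₂ := by
  induction l₁ with
  | nil => simp [valL]
  | cons b t ih => simp [valL, ih, pow_succ]; ring

theorem valL_replicate_true (j : ℕ) : valL (List.replicate j true) = 2 ^ j - 1 := by
  induction j with
  | zero => simp [valL]
  | succ j ih =>
    rw [List.replicate_succ, valL, ih]
    have : 1 ≤ 2 ^ j := Nat.one_le_two_pow
    simp [pow_succ]; omega

theorem valL_replicate_false (j : ℕ) : valL (List.replicate j false) = 0 := by
  induction j with
  | zero => simp [valL]
  | succ j ih => rw [List.replicate_succ, valL, ih]; simp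

theorem pow_le' (j : ℕ) : 1 ≤ 2 ^ j := Nat.one_le_two_pow

theorem concat_last {α : Type} {l₁ : List α} {b c : α} {l₂ : List α}
    (h : l₁ ++ [b] = l₂ ++ [c]) : b = c := by
  have := congrArg List.getLast? h
  rw [List.getLast?_concat, List.getLast?_concat] at this
  simpa using this

theorem tail_ends_true {pre ξ L : List Bool}
    (hL : pre ++ ξ = L) (hl : ∃ l, L = l ++ [true]) (hξ : ξ ≠ []) :
    ∃ v, ξ = v ++ [true] := by
  rcases ξ.eq_nil_or_concat with h0 | ⟨v, b, hvb⟩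
  · exact absurd h0 hξ
  · have hvb' : ξ = v ++ [b] := by simpa using hvb
    obtain ⟨l, hl⟩ := hl
    refine ⟨v, ?_⟩
    rw [hvb'] at hL
    rw [← hL, show pre ++ (v ++ [b]) = (pre ++ v) ++ [b] by simp] at hl
    rw [hvb', concat_last hl]

theorem valL_cons (c : Bool) (ξ : List Bool) :
    valL (c :: ξ) = (cond c 1 0) + 2 * valL ξ := rfl

theorem valL_t (j : ℕ) (c : Bool) (ξ : List Bool) :
    valL (List.replicate j true ++ c :: ξ) = 2 ^ j - 1 + 2 ^ j * ((cond c 1 0) + 2 * valL ξ) := by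
  rw [valL_append, valL_replicate_true, valL_cons, List.length_replicate]

theorem valL_f (j : ℕ) (c : Bool) (ξ : List Bool) :
    valL (List.replicate j false ++ c :: ξ) = 2 ^ j * ((cond c 1 0) + 2 * valL ξ) := by
  rw [valL_append, valL_replicate_false, valL_cons, List.length_replicate]; omega

theorem step_eq (j V : ℕ) :
    2 ^ j - 1 + 2 ^ j * (0 + 2 * V) + 1 = 2 ^ j * (1 + 2 * V) := by
  have hP := pow_le' j
  have h1 : 2 ^ j * (1 + 2 * V) = 2 ^ j + 2 ^ j * (2 * V) := by ring
  have h2 : 2 ^ j * (0 + 2 * V) = 2 ^ j * (2 * V) := by ring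
  rw [h1, h2]; omega

/-- increment: non-power case -/
theorem inc_bits (m j : ℕ) (ξ : List Bool)
    (h : m.bits = List.replicate j true ++ false :: ξ) :
    (m + 1).bits = List.replicate j false ++ true :: ξ := by
  have hm0 : m ≠ 0 := by
    intro h0; rw [h0, Nat.zero_bits] at h
    exact absurd h (by simp)
  have hend := bits_ends_true m hm0
  rw [h] at hend
  have hξ : ∃ v, ξ = v ++ [true] := by
    rcases ξ.eq_nil_or_concat with h0 | ⟨v, b, hvb⟩
    · exfalso
      rw [h0] at hend
      obtain ⟨l, hl⟩ := hend
      have : (false : Bool) = true :=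
        concat_last (l₁ := List.replicate j true) hl
      simp at this
    · exact tail_ends_true (pre := List.replicate j true ++ [false])
        (by simp) hend (by rw [hvb]; simp)
  obtain ⟨v, hv⟩ := hξ
  subst hv
  have hval : m = valL (List.replicate j true ++ false :: (v ++ [true])) := by
    rw [← h, valL_bits]
  have key : m + 1 = valL (List.replicate j false ++ true :: (v ++ [true])) := by
    rw [hval, valL_t, valL_f]
    simp only [cond_true, cond_false]
    exact step_eq j (valL (v ++ [true]))
  rw [key, show List.replicate j false ++ true :: (v ++ [true]) =
    (List.replicate j false ++ true :: v) ++ [true] by simp, bits_of_valL]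

/-- increment: power-of-two case -/
theorem inc_bits_pow (m j : ℕ) (h : m.bits = List.replicate j true) :
    (m + 1).bits = List.replicate j false ++ [true] := by
  have hval : m = 2 ^ j - 1 := by
    rw [← valL_bits m, h, valL_replicate_true]
  have key : m + 1 = valL (List.replicate j false ++ [true]) := by
    rw [hval, show ([true] : List Bool) = true :: [] from rfl, valL_f]
    have := pow_le' j
    simp [valL]
    omega
  rw [key, bits_of_valL]

/-- decrement: non-power case -/
theorem dec_bits (n j : ℕ) (ξ : List Bool) (hξ : ξ ≠ [])
    (h : (n + 1).bits = List.replicate j false ++ true :: ξ) :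
    n.bits = List.replicate j true ++ false :: ξ := by
  have hend := bits_ends_true (n+1) (by omega)
  rw [h] at hend
  have hξ2 : ∃ v, ξ = v ++ [true] :=
    tail_ends_true (pre := List.replicate j false ++ [true]) (by simp) hend hξ
  obtain ⟨v, hv⟩ := hξ2
  subst hv
  have hval : n + 1 = valL (List.replicate j false ++ true :: (v ++ [true])) := by
    rw [← h, valL_bits]
  have key : n = valL (List.replicate j true ++ false :: (v ++ [true])) := by
    rw [valL_f] at hval
    rw [valL_t]
    simp only [cond_true, cond_false] at hval ⊢
    have := step_eq j (valL (v ++ [true]))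
    omega
  rw [key, show List.replicate j true ++ false :: (v ++ [true]) =
    (List.replicate j true ++ false :: v) ++ [true] by simp, bits_of_valL]

/-- decrement: power-of-two case -/
theorem dec_bits_pow (n j : ℕ) (h : (n + 1).bits = List.replicate j false ++ [true]) :
    n.bits = List.replicate j true := by
  have hval : n + 1 = valL (List.replicate j false ++ [true]) := by
    rw [← h, valL_bits]
  rw [show ([true] : List Bool) = true :: [] from rfl, valL_f] at hval
  simp [valL] at hval
  cases j with
  | zero =>
    have : n = 0 := by simpa using hval
    rw [this, Nat.zero_bits]; simp
  | succ j =>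
    have hn : n = valL (List.replicate (j+1) true) := by
      rw [valL_replicate_true]
      have := pow_le' (j+1)
      omega
    rw [hn, show List.replicate (j+1) true = List.replicate j true ++ [true] by
      rw [← List.replicate_succ']]
    exact bits_of_valL _
/-! ### natBin and encoding lemmas -/

instance : Inhabited CSym := ⟨CSym.b0⟩

abbrev enc := bitsToCSym

/-- bit to symbol -/
def bc (b : Bool) : CSym := if b then CSym.b1 else CSym.b0

@[simp] theorem bc_true : bc true = CSym.b1 := rfl
@[simp] theorem bc_false : bc false = CSym.b0 := rfl

theorem enc_def (w : List Bool) : enc w = w.map (fun b => if b then CSym.b1 else CSym.b0) := rfl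

theorem enc_append (a b : List Bool) : enc (a ++ b) = enc a ++ enc b := by
  simp [enc_def]

theorem enc_reverse (a : List Bool) : (enc a).reverse = enc a.reverse := by
  simp [enc_def]

theorem enc_replicate_true (j : ℕ) :
    enc (List.replicate j true) = List.replicate j CSym.b1 := by
  simp [enc_def]

theorem enc_replicate_false (j : ℕ) :
    enc (List.replicate j false) = List.replicate j CSym.b0 := by
  simp [enc_def]

theorem enc_cons (b : Bool) (l : List Bool) :
    enc (b :: l) = bc b :: enc l := rfl

@[simp] theorem enc_nil : enc [] = [] := rfl

theorem enc_ne_circ (b : Bool) : bc b ≠ CSym.circ := by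
  cases b <;> simp [bc]

theorem enc_ne_hash (b : Bool) : bc b ≠ CSym.hash := by
  cases b <;> simp [bc]

theorem bchar_inj {b c : Bool} (h : bc b = bc c) : b = c := by
  cases b <;> cases c <;> simp_all [bc]

/-- splitting at the first separator symbol -/
theorem enc_sep_split (s : CSym) (hs : s = CSym.circ ∨ s = CSym.hash) :
    ∀ (a b : List Bool) (α β : List CSym),
      enc a ++ s :: α = enc b ++ s :: β → a = b ∧ α = β := by
  intro a
  induction a with
  | nil =>
    intro b α β h
    cases b with
    | nil => simpa [enc_nil] using h
    | cons c b' =>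
      exfalso
      rw [enc_nil, enc_cons] at h
      have : s = bc c := by
        simpa using congrArg (fun l => l.headI) h
      rcases hs with rfl | rfl
      · exact enc_ne_circ c this.symm
      · exact enc_ne_hash c this.symm
  | cons c a' ih =>
    intro b α β h
    cases b with
    | nil =>
      exfalso
      rw [enc_nil, enc_cons] at h
      have : bc c = s := by
        simpa using congrArg (fun l => l.headI) h
      rcases hs with rfl | rfl
      · exact enc_ne_circ c this
      · exact enc_ne_hash c this
    | cons d b' =>
      rw [enc_cons, enc_cons] at h
      have h1 : bc c = bc d := by
        simpa using congrArg (fun l => l.headI) h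
      have h2 := bchar_inj h1
      subst h2
      have h3 : enc a' ++ s :: α = enc b' ++ s :: β := by
        simpa using congrArg (fun l => l.tail) h
      obtain ⟨rfl, rfl⟩ := ih b' α β h3
      exact ⟨rfl, rfl⟩

/-- a 0-run followed by # is never an enc-prefix followed by 1 -/
theorem rep_hash_ne_enc :
    ∀ (j : ℕ) (v : List Bool) (ξ ζ : List CSym),
      List.replicate j CSym.b0 ++ CSym.hash :: ζ ≠ enc v ++ CSym.b1 :: ξ := by
  intro j
  induction j with
  | zero =>
    intro v ξ ζ h
    cases v with
    | nil => simp [enc_nil] at h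
    | cons c v' =>
      rw [enc_cons] at h
      have : CSym.hash = bc c := by
        simpa using congrArg (fun l => l.headI) h
      exact enc_ne_hash c this.symm
  | succ j ih =>
    intro v ξ ζ h
    rw [List.replicate_succ] at h
    cases v with
    | nil => simp [enc_nil] at h
    | cons c v' =>
      rw [enc_cons] at h
      have h1 : CSym.b0 = bc c := by
        simpa using congrArg (fun l => l.headI) h
      have hc : c = false := by
        cases c
        · rfl
        · exfalso; simp at h1
      subst hc
      have h3 : List.replicate j CSym.b0 ++ CSym.hash :: ζ = enc v' ++ CSym.b1 :: ξ := by
        simpa using congrArg (fun l => l.tail) h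
      exact ih v' ξ ζ h3

theorem natBin_zero : natBin 0 = [false] := by simp [natBin]

theorem natBin_succ (n : ℕ) : natBin (n + 1) = (Nat.bits (n+1)).reverse := by
  simp [natBin]

theorem natBin_ne_nil (n : ℕ) : natBin n ≠ [] := by
  cases n with
  | zero => simp [natBin_zero]
  | succ n =>
    rw [natBin_succ]
    intro h
    have h2 : Nat.bits (n+1) = [] := by simpa using congrArg List.reverse h
    have h3 := valL_bits (n+1)
    rw [h2] at h3
    simp [valL] at h3

theorem natBin_false_cons (m : ℕ) (l : List Bool) (h : natBin m = false :: l) :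
    m = 0 ∧ l = [] := by
  cases m with
  | zero =>
    rw [natBin_zero] at h
    refine ⟨rfl, ?_⟩
    simpa using h.symm
  | succ m =>
    exfalso
    rw [natBin_succ] at h
    have hb : Nat.bits (m+1) = l.reverse ++ [false] := by
      have := congrArg List.reverse h
      simpa using this
    obtain ⟨l', hl'⟩ := bits_ends_true (m+1) (by omega)
    rw [hl'] at hb
    have : (true : Bool) = false := concat_last hb
    simp at this

/-- first-true decomposition of a bit list -/
theorem first_true_decomp :
    ∀ (l : List Bool), true ∈ l → ∃ j ξ, l = List.replicate j false ++ true :: ξ := by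
  intro l
  induction l with
  | nil => simp
  | cons b t ih =>
    intro h
    cases b with
    | true => exact ⟨0, t, by simp⟩
    | false =>
      have : true ∈ t := by simpa using h
      obtain ⟨j, ξ, hj⟩ := ih this
      exact ⟨j + 1, ξ, by rw [List.replicate_succ, hj]; simp⟩

theorem true_mem_bits (n : ℕ) (hn : n ≠ 0) : true ∈ n.bits := by
  by_contra h
  have : n.bits = List.replicate n.bits.length false := by
    apply List.eq_replicate_of_mem
    intro b hb
    cases b
    · rfl
    · exact absurd hb h
  have h2 := valL_bits n
  rw [this, valL_replicate_false] at h2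
  omega
/-! ### The grammar -/

inductive N : Type
  | T | D | DD | P | Sq
  deriving DecidableEq

instance : Finite N := by
  have : Function.Surjective (fun i : Fin 5 => match i with
    | 0 => N.T | 1 => N.D | 2 => N.DD | 3 => N.P | 4 => N.Sq) := by
    intro A; cases A
    · exact ⟨0, rfl⟩
    · exact ⟨1, rfl⟩
    · exact ⟨2, rfl⟩
    · exact ⟨3, rfl⟩
    · exact ⟨4, rfl⟩
  exact Finite.of_surjective _ this

def anyE : PExp CSym N :=
  .choice (.term .b0) (.choice (.term .b1) (.choice (.term .circ) (.term .hash)))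

def Rules : N → PExp CSym N
  | .T => .choice (.seq (.term .b0) (.seq (.nt .T) (.term .b1))) (.term .hash)
  | .D => .choice (.seq (.term .b0) (.seq (.nt .D) (.term .b0)))
      (.choice (.seq (.term .b1) (.seq (.nt .D) (.term .b1)))
               (.seq (.term .b1) (.seq (.nt .T) (.term .b0))))
  | .DD => .choice (.seq (.nt .D) (.term .b1))
      (.choice (.seq (.nt .T) (.term .b0)) (.nt .T))
  | .P => .choice (.seq (.term .b0) (.seq (.nt .P) (.term .b0)))
      (.choice (.seq (.term .b1) (.seq (.nt .P) (.term .b1)))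
               (.seq (.term .circ) (.andP (.seq (.term .b1) (.seq (.nt .DD) (.term .circ))))))
  | .Sq => .choice
      (.seq (.term .b0) (.seq (.term .circ) (.seq (.term .b0) (.seq (.term .hash) (.notP anyE)))))
      (.seq (.nt .P) (.seq (.term .hash) (.nt .Sq)))

/-! ### Executable recognizers -/

def expect (a : CSym) : List CSym → Option (List CSym)
  | c :: z => if c = a then some z else none
  | [] => none

def orE : Option (List CSym) → Option (List CSym) → Option (List CSym)
  | some a, _ => some a
  | none, b => b

@[simp] theorem orE_some (a : List CSym) (o : Option (List CSym)) : orE (some a) o = some a := rfl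
@[simp] theorem orE_none (o : Option (List CSym)) : orE none o = o := rfl

theorem orE_eq_some {o₁ o₂ : Option (List CSym)} {z : List CSym} (h : orE o₁ o₂ = some z) :
    o₁ = some z ∨ (o₁ = none ∧ o₂ = some z) := by
  cases o₁ with
  | some a => left; simpa using h
  | none => right; simpa using h

@[simp] theorem expect_some {a : CSym} {x z : List CSym} : expect a x = some z ↔ x = a :: z := by
  cases x with
  | nil => simp [expect]
  | cons c t =>
    simp only [expect]
    by_cases h : c = a
    · subst h; simp
    · simp [h]

theorem expect_len {a : CSym} {x z : List CSym} (h : expect a x = some z) :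
    z.length < x.length := by
  rw [expect_some] at h; subst h; simp

def gT (x : List CSym) : Option (List CSym) :=
  orE (match h : expect .b0 x with
       | some z => (gT z).bind (expect .b1)
       | none => none)
      (expect .hash x)
termination_by x.length
decreasing_by exact expect_len h

def gD (x : List CSym) : Option (List CSym) :=
  orE (match h : expect .b0 x with
       | some z => (gD z).bind (expect .b0)
       | none => none)
      (orE (match h : expect .b1 x with
            | some z => (gD z).bind (expect .b1)
            | none => none)
           (match h : expect .b1 x with
            | some z => (gT z).bind (expect .b0)
            | none => none))
termination_by x.length
decreasing_by
  · exact expect_len h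
  · exact expect_len h

def gDD (x : List CSym) : Option (List CSym) :=
  orE ((gD x).bind (expect .b1))
      (orE ((gT x).bind (expect .b0)) (gT x))

/-- the lookahead body: `1 · DD · ∘` -/
def chk (x : List CSym) : Option (List CSym) :=
  (expect .b1 x).bind fun z => (gDD z).bind (expect .circ)

def gP (x : List CSym) : Option (List CSym) :=
  orE (match h : expect .b0 x with
       | some z => (gP z).bind (expect .b0)
       | none => none)
      (orE (match h : expect .b1 x with
            | some z => (gP z).bind (expect .b1)
            | none => none)
           ((expect .circ x).bind fun z => if (chk z).isSome then some z else none))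
termination_by x.length
decreasing_by
  · exact expect_len h
  · exact expect_len h

theorem gP_len : ∀ (x z : List CSym), gP x = some z → z.length < x.length := by
  have key : ∀ (n : ℕ) (x z : List CSym), x.length < n → gP x = some z → z.length < x.length := by
    intro n
    induction n with
    | zero => intro x z h; omega
    | succ n ih =>
      intro x z hx h
      rw [gP] at h
      rcases orE_eq_some h with h1 | ⟨_, h1⟩
      · revert h1
        cases h0 : expect CSym.b0 x with
        | none => intro h1; exact absurd h1 (by simp)
        | some w =>
          intro h1
          simp only [Option.bind_eq_some_iff] at h1
          obtain ⟨u, hu, hz⟩ := h1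
          have h2 := expect_len h0
          have h3 := ih w u (by omega) hu
          have h4 := expect_len hz
          omega
      · rcases orE_eq_some h1 with h2 | ⟨_, h2⟩
        · revert h2
          cases h0 : expect CSym.b1 x with
          | none => intro h2; exact absurd h2 (by simp)
          | some w =>
            intro h2
            simp only [Option.bind_eq_some_iff] at h2
            obtain ⟨u, hu, hz⟩ := h2
            have h3 := expect_len h0
            have h4 := ih w u (by omega) hu
            have h5 := expect_len hz
            omega
        · simp only [Option.bind_eq_some_iff] at h2
          obtain ⟨u, hu, hz⟩ := h2
          have h3 := expect_len hu
          split at hz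
          · cases hz; omega
          · cases hz
  intro x z h
  exact key (x.length + 1) x z (by omega) h

def gAny (x : List CSym) : Option (List CSym) :=
  orE (expect .b0 x) (orE (expect .b1 x) (orE (expect .circ x) (expect .hash x)))

def gS (x : List CSym) : Option (List CSym) :=
  orE ((expect .b0 x).bind fun z => (expect .circ z).bind fun z => (expect .b0 z).bind fun z =>
        (expect .hash z).bind fun z => if (gAny z).isSome then none else some z)
      (match h : (gP x).bind (expect .hash) with
       | some z => gS z
       | none => none)
termination_by x.length
decreasing_by
  simp only [Option.bind_eq_some_iff] at h
  obtain ⟨w, hw, hz⟩ := h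
  have := gP_len x w hw
  have := expect_len hz
  omega
/-! ### Agreement of the recognizers with the PEG semantics -/

def Match (e : PExp CSym N) (x : List CSym) : Option (List CSym) → Prop
  | none => PegRec Rules e x none
  | some z => ∃ y, x = y ++ z ∧ PegRec Rules e x (some y)

theorem match_term (a : CSym) (x : List CSym) : Match (.term a) x (expect a x) := by
  cases x with
  | nil => exact PegRec.termNil a
  | cons c t =>
    show Match _ _ (if c = a then some t else none)
    by_cases h : c = a
    · subst h
      rw [if_pos rfl]
      exact ⟨[c], rfl, PegRec.termOk c t⟩
    · rw [if_neg h]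
      exact PegRec.termMismatch a c t (fun hh => h hh.symm)

theorem match_seq {e₁ e₂ : PExp CSym N} {x : List CSym} {o₁ : Option (List CSym)}
    (g₂ : List CSym → Option (List CSym))
    (h₁ : Match e₁ x o₁) (h₂ : ∀ z, o₁ = some z → Match e₂ z (g₂ z)) :
    Match (.seq e₁ e₂) x (o₁.bind g₂) := by
  cases o₁ with
  | none => exact PegRec.seqFail₁ _ _ _ h₁
  | some z =>
    obtain ⟨y, hxy, hy⟩ := h₁
    have h₂' := h₂ z rfl
    show Match _ _ (g₂ z)
    cases hg : g₂ z with
    | none =>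
      rw [hg] at h₂'
      show Match _ _ none
      subst hxy
      exact PegRec.seqFail₂ _ _ _ _ hy h₂'
    | some z₂ =>
      rw [hg] at h₂'
      obtain ⟨y₂, hzy, hy₂⟩ := h₂'
      show Match _ _ (some z₂)
      subst hzy
      subst hxy
      exact ⟨y ++ y₂, by simp, PegRec.seqOk e₁ e₂ y (y₂ ++ z₂) y₂ hy hy₂⟩

theorem match_choice {e₁ e₂ : PExp CSym N} {x : List CSym} {o₁ o₂ : Option (List CSym)}
    (h₁ : Match e₁ x o₁) (h₂ : o₁ = none → Match e₂ x o₂) :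
    Match (.choice e₁ e₂) x (orE o₁ o₂) := by
  cases o₁ with
  | some z =>
    obtain ⟨y, hxy, hy⟩ := h₁
    exact ⟨y, hxy, PegRec.choice₁ _ _ _ _ hy⟩
  | none =>
    have h₂' := h₂ rfl
    show Match _ _ o₂
    cases o₂ with
    | none => exact PegRec.choice₂ _ _ _ _ h₁ h₂'
    | some z =>
      obtain ⟨y, hxy, hy⟩ := h₂'
      exact ⟨y, hxy, PegRec.choice₂ _ _ _ _ h₁ hy⟩

theorem match_and {e : PExp CSym N} {x : List CSym} {o : Option (List CSym)}
    (h : Match e x o) : Match (.andP e) x (if o.isSome then some x else none) := by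
  cases o with
  | none => exact PegRec.andFail _ _ h
  | some z =>
    obtain ⟨y, hxy, hy⟩ := h
    exact ⟨[], by simp, PegRec.andSucc _ _ _ hy⟩

theorem match_not {e : PExp CSym N} {x : List CSym} {o : Option (List CSym)}
    (h : Match e x o) : Match (.notP e) x (if o.isSome then none else some x) := by
  cases o with
  | none => exact ⟨[], by simp, PegRec.notFail _ _ h⟩
  | some z =>
    obtain ⟨y, hxy, hy⟩ := h
    exact PegRec.notSucc _ _ _ hy

theorem match_nt {A : N} {x : List CSym} {o : Option (List CSym)}
    (h : Match (Rules A) x o) : Match (.nt A) x o := by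
  cases o with
  | none => exact PegRec.ntRule _ _ _ h
  | some z =>
    obtain ⟨y, hxy, hy⟩ := h
    exact ⟨y, hxy, PegRec.ntRule _ _ _ hy⟩

theorem match_any (x : List CSym) : Match anyE x (gAny x) :=
  match_choice (match_term _ _) (fun _ =>
    match_choice (match_term _ _) (fun _ =>
      match_choice (match_term _ _) (fun _ => match_term _ _)))

/-! bind-form equations for the recognizers -/

theorem gT_eq (x : List CSym) : gT x =
    orE ((expect .b0 x).bind fun z => (gT z).bind (expect .b1)) (expect .hash x) := by
  rw [gT]; cases h : expect CSym.b0 x <;> simp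

theorem gD_eq (x : List CSym) : gD x =
    orE ((expect .b0 x).bind fun z => (gD z).bind (expect .b0))
      (orE ((expect .b1 x).bind fun z => (gD z).bind (expect .b1))
           ((expect .b1 x).bind fun z => (gT z).bind (expect .b0))) := by
  rw [gD]
  cases h : expect CSym.b0 x <;> cases h1 : expect CSym.b1 x <;> simp

theorem gP_eq (x : List CSym) : gP x =
    orE ((expect .b0 x).bind fun z => (gP z).bind (expect .b0))
      (orE ((expect .b1 x).bind fun z => (gP z).bind (expect .b1))
           ((expect .circ x).bind fun z => if (chk z).isSome then some z else none)) := by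
  rw [gP]
  cases h : expect CSym.b0 x <;> cases h1 : expect CSym.b1 x <;> simp

theorem gS_eq (x : List CSym) : gS x =
    orE ((expect .b0 x).bind fun z => (expect .circ z).bind fun z => (expect .b0 z).bind fun z =>
          (expect .hash z).bind fun z => if (gAny z).isSome then none else some z)
      ((gP x).bind fun w => (expect .hash w).bind fun z => gS z) := by
  rw [gS]
  congr 1
  split
  · next z heq =>
    rw [Option.bind_eq_some_iff] at heq
    obtain ⟨w, hw, hz⟩ := heq
    rw [hw]
    simp [hz]
  · next heq =>
    cases hp : gP x with
    | none => rfl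
    | some w =>
      rw [hp] at heq
      simp at heq
      simp [heq]

/-- the conjunction of agreement statements -/
def MA (x : List CSym) : Prop :=
  Match (.nt N.T) x (gT x) ∧ Match (.nt N.D) x (gD x) ∧ Match (.nt N.DD) x (gDD x) ∧
  Match (.nt N.P) x (gP x) ∧ Match (.nt N.Sq) x (gS x)

theorem master : ∀ x : List CSym, MA x := by
  have key : ∀ (n : ℕ) (x : List CSym), x.length < n → MA x := by
    intro n
    induction n with
    | zero => intro x h; omega
    | succ n ih =>
      intro x hx
      have hT : Match (.nt N.T) x (gT x) := by
        apply match_nt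
        show Match (.choice (.seq (.term .b0) (.seq (.nt .T) (.term .b1))) (.term .hash)) x _
        rw [gT_eq]
        apply match_choice
        · apply match_seq _ (match_term _ _)
          intro z hz
          have hlz : z.length < n := by have := expect_len hz; omega
          apply match_seq _ (ih z hlz).1
          intro w _
          exact match_term _ _
        · intro _
          exact match_term _ _
      have hD : Match (.nt N.D) x (gD x) := by
        apply match_nt
        show Match (.choice (.seq (.term .b0) (.seq (.nt .D) (.term .b0)))
          (.choice (.seq (.term .b1) (.seq (.nt .D) (.term .b1)))
                   (.seq (.term .b1) (.seq (.nt .T) (.term .b0))))) x _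
        rw [gD_eq]
        apply match_choice
        · apply match_seq _ (match_term _ _)
          intro z hz
          have hlz : z.length < n := by have := expect_len hz; omega
          apply match_seq _ (ih z hlz).2.1
          intro w _
          exact match_term _ _
        intro _
        apply match_choice
        · apply match_seq _ (match_term _ _)
          intro z hz
          have hlz : z.length < n := by have := expect_len hz; omega
          apply match_seq _ (ih z hlz).2.1
          intro w _
          exact match_term _ _
        · intro _
          apply match_seq _ (match_term _ _)
          intro z hz
          have hlz : z.length < n := by have := expect_len hz; omega
          apply match_seq _ (ih z hlz).1
          intro w _
          exact match_term _ _
      have hDD : Match (.nt N.DD) x (gDD x) := by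
        apply match_nt
        show Match (.choice (.seq (.nt .D) (.term .b1))
          (.choice (.seq (.nt .T) (.term .b0)) (.nt .T))) x _
        show Match _ _ (orE ((gD x).bind (expect .b1))
          (orE ((gT x).bind (expect .b0)) (gT x)))
        apply match_choice
        · apply match_seq _ hD
          intro z _
          exact match_term _ _
        intro _
        apply match_choice
        · apply match_seq _ hT
          intro z _
          exact match_term _ _
        · intro _
          exact hT
      have hP : Match (.nt N.P) x (gP x) := by
        apply match_nt
        show Match (.choice (.seq (.term .b0) (.seq (.nt .P) (.term .b0)))
          (.choice (.seq (.term .b1) (.seq (.nt .P) (.term .b1)))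
                   (.seq (.term .circ) (.andP (.seq (.term .b1) (.seq (.nt .DD) (.term .circ))))))) x _
        rw [gP_eq]
        apply match_choice
        · apply match_seq _ (match_term _ _)
          intro z hz
          have hlz : z.length < n := by have := expect_len hz; omega
          apply match_seq _ (ih z hlz).2.2.2.1
          intro w _
          exact match_term _ _
        intro _
        apply match_choice
        · apply match_seq _ (match_term _ _)
          intro z hz
          have hlz : z.length < n := by have := expect_len hz; omega
          apply match_seq _ (ih z hlz).2.2.2.1
          intro w _
          exact match_term _ _
        · intro _
          apply match_seq _ (match_term _ _)
          intro z hz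
          have hlz : z.length < n := by have := expect_len hz; omega
          have hin : Match (.seq (.term .b1) (.seq (.nt .DD) (.term .circ))) z (chk z) := by
            apply match_seq _ (match_term _ _)
            intro w hw
            have hlw : w.length < n := by have := expect_len hw; omega
            apply match_seq _ (ih w hlw).2.2.1
            intro v _
            exact match_term _ _
          exact match_and hin
      have hSq : Match (.nt N.Sq) x (gS x) := by
        apply match_nt
        show Match (.choice
          (.seq (.term .b0) (.seq (.term .circ) (.seq (.term .b0) (.seq (.term .hash) (.notP anyE)))))
          (.seq (.nt .P) (.seq (.term .hash) (.nt .Sq)))) x _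
        rw [gS_eq]
        apply match_choice
        · apply match_seq _ (match_term _ _)
          intro z _
          apply match_seq _ (match_term _ _)
          intro z2 _
          apply match_seq _ (match_term _ _)
          intro z3 _
          apply match_seq _ (match_term _ _)
          intro z4 _
          exact match_not (match_any z4)
        · intro _
          apply match_seq _ hP
          intro w hw
          have hlw : w.length < x.length := gP_len x w hw
          apply match_seq _ (match_term _ _)
          intro z hz
          have hlz : z.length < n := by have := expect_len hz; omega
          exact (ih z hlz).2.2.2.2
      exact ⟨hT, hD, hDD, hP, hSq⟩
  intro x
  exact key (x.length + 1) x (by omega)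
/-! ### Prefix, determinism, totality -/

theorem peg_prefix {α ν : Type} {R : ν → PExp α ν} {e : PExp α ν} {x : List α}
    {r : Option (List α)} (h : PegRec R e x r) : ∀ y, r = some y → ∃ z, x = y ++ z := by
  induction h with
  | eps x => intro y hy; cases hy; exact ⟨x, by simp⟩
  | fail x => intro y hy; cases hy
  | termOk a z => intro y hy; cases hy; exact ⟨z, rfl⟩
  | termMismatch a b z h => intro y hy; cases hy
  | termNil a => intro y hy; cases hy
  | notFail e x he ih => intro y hy; cases hy; exact ⟨x, by simp⟩
  | notSucc e x y hy ih => intro y hy; cases hy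
  | andSucc e x y hy ih => intro y' hy'; cases hy'; exact ⟨x, by simp⟩
  | andFail e x he ih => intro y hy; cases hy
  | seqOk e₁ e₂ y₁ z y₂ h1 h2 ih1 ih2 =>
    intro y hy; cases hy
    obtain ⟨z₂, hz₂⟩ := ih2 y₂ rfl
    exact ⟨z₂, by rw [hz₂]; simp⟩
  | seqFail₁ e₁ e₂ x h ih => intro y hy; cases hy
  | seqFail₂ e₁ e₂ y₁ z h1 h2 ih1 ih2 => intro y hy; cases hy
  | choice₁ e₁ e₂ x y hy ih => intro y' hy'; exact ih y' hy'
  | choice₂ e₁ e₂ x r h1 h2 ih1 ih2 => intro y hy; exact ih2 y hy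
  | ntRule A x r h ih => intro y hy; exact ih y hy

theorem peg_det {α ν : Type} {R : ν → PExp α ν} :
    ∀ {e : PExp α ν} {x : List α} {r₁ : Option (List α)}, PegRec R e x r₁ →
      ∀ {r₂ : Option (List α)}, PegRec R e x r₂ → r₁ = r₂ := by
  intro e x r₁ h₁
  induction h₁ with
  | eps x => intro r₂ h₂; cases h₂; rfl
  | fail x => intro r₂ h₂; cases h₂; rfl
  | termOk a z =>
    intro r₂ h₂
    cases h₂ with
    | termOk => rfl
    | termMismatch _ _ _ h => exact absurd rfl h
  | termMismatch a b z h =>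
    intro r₂ h₂
    cases h₂ with
    | termOk => exact absurd rfl h
    | termMismatch => rfl
  | termNil a => intro r₂ h₂; cases h₂; rfl
  | notFail e x he ih =>
    intro r₂ h₂
    cases h₂ with
    | notFail => rfl
    | notSucc _ _ y hy => exact absurd (ih hy) (by simp)
  | notSucc e x y hy ih =>
    intro r₂ h₂
    cases h₂ with
    | notFail _ _ h => exact absurd (ih h) (by simp)
    | notSucc => rfl
  | andSucc e x y hy ih =>
    intro r₂ h₂
    cases h₂ with
    | andSucc => rfl
    | andFail _ _ h => exact absurd (ih h) (by simp)
  | andFail e x he ih =>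
    intro r₂ h₂
    cases h₂ with
    | andSucc _ _ y hy => exact absurd (ih hy) (by simp)
    | andFail => rfl
  | seqOk e₁ e₂ y₁ z y₂ h1 h2 ih1 ih2 =>
    intro r₂ h₂
    generalize hx : y₁ ++ z = x at h₂
    cases h₂ with
    | seqOk e₁' e₂' y₁' z' y₂' h1' h2' =>
      rw [← hx] at h1'
      have hy := ih1 h1'
      cases hy
      have hz : z = z' := List.append_cancel_left hx
      subst hz
      have := ih2 h2'
      cases this
      rfl
    | seqFail₁ _ _ _ h =>
      rw [← hx] at h
      exact absurd (ih1 h) (by simp)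
    | seqFail₂ _ _ y₁' z' h1' h2' =>
      rw [← hx] at h1'
      have hy := ih1 h1'
      cases hy
      have hz : z = z' := List.append_cancel_left hx
      subst hz
      exact absurd (ih2 h2') (by simp)
  | seqFail₁ e₁ e₂ x h ih =>
    intro r₂ h₂
    cases h₂ with
    | seqOk _ _ y₁' z' y₂' h1' h2' => exact absurd (ih h1') (by simp)
    | seqFail₁ => rfl
    | seqFail₂ _ _ y₁' z' h1' h2' => exact absurd (ih h1') (by simp)
  | seqFail₂ e₁ e₂ y₁ z h1 h2 ih1 ih2 =>
    intro r₂ h₂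
    generalize hx : y₁ ++ z = x at h₂
    cases h₂ with
    | seqOk e₁' e₂' y₁' z' y₂' h1' h2' =>
      rw [← hx] at h1'
      have hy := ih1 h1'
      cases hy
      have hz : z = z' := List.append_cancel_left hx
      subst hz
      exact absurd (ih2 h2') (by simp)
    | seqFail₁ _ _ _ h => rfl
    | seqFail₂ _ _ y₁' z' h1' h2' => rfl
  | choice₁ e₁ e₂ x y hy ih =>
    intro r₂ h₂
    cases h₂ with
    | choice₁ _ _ _ y' hy' => exact ih hy'
    | choice₂ _ _ _ r h1 h2 => exact absurd (ih h1) (by simp)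
  | choice₂ e₁ e₂ x r h1 h2 ih1 ih2 =>
    intro r₂ h₂
    cases h₂ with
    | choice₁ _ _ _ y' hy' => exact absurd (ih1 hy') (by simp)
    | choice₂ _ _ _ r' h1' h2' => exact ih2 h2'
  | ntRule A x r h ih =>
    intro r₂ h₂
    cases h₂ with
    | ntRule _ _ r' h' => exact ih h'

theorem total_aux : ∀ (e : PExp CSym N) (x : List CSym), ∃ r, PegRec Rules e x r := by
  intro e
  induction e with
  | eps => intro x; exact ⟨some [], PegRec.eps x⟩
  | fail => intro x; exact ⟨none, PegRec.fail x⟩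
  | term a =>
    intro x
    cases x with
    | nil => exact ⟨none, PegRec.termNil a⟩
    | cons c t =>
      by_cases h : a = c
      · subst h; exact ⟨some [a], PegRec.termOk a t⟩
      · exact ⟨none, PegRec.termMismatch a c t h⟩
  | nt A =>
    intro x
    have hm := master x
    cases A
    case T =>
      cases h : gT x with
      | none => have := hm.1; rw [h] at this; exact ⟨none, this⟩
      | some z => have := hm.1; rw [h] at this; obtain ⟨y, _, hy⟩ := this; exact ⟨some y, hy⟩
    case D =>
      cases h : gD x with
      | none => have := hm.2.1; rw [h] at this; exact ⟨none, this⟩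
      | some z => have := hm.2.1; rw [h] at this; obtain ⟨y, _, hy⟩ := this; exact ⟨some y, hy⟩
    case DD =>
      cases h : gDD x with
      | none => have := hm.2.2.1; rw [h] at this; exact ⟨none, this⟩
      | some z => have := hm.2.2.1; rw [h] at this; obtain ⟨y, _, hy⟩ := this; exact ⟨some y, hy⟩
    case P =>
      cases h : gP x with
      | none => have := hm.2.2.2.1; rw [h] at this; exact ⟨none, this⟩
      | some z => have := hm.2.2.2.1; rw [h] at this; obtain ⟨y, _, hy⟩ := this; exact ⟨some y, hy⟩
    case Sq =>
      cases h : gS x with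
      | none => have := hm.2.2.2.2; rw [h] at this; exact ⟨none, this⟩
      | some z => have := hm.2.2.2.2; rw [h] at this; obtain ⟨y, _, hy⟩ := this; exact ⟨some y, hy⟩
  | notP e ih =>
    intro x
    obtain ⟨r, hr⟩ := ih x
    cases r with
    | none => exact ⟨some [], PegRec.notFail _ _ hr⟩
    | some y => exact ⟨none, PegRec.notSucc _ _ _ hr⟩
  | andP e ih =>
    intro x
    obtain ⟨r, hr⟩ := ih x
    cases r with
    | none => exact ⟨none, PegRec.andFail _ _ hr⟩
    | some y => exact ⟨some [], PegRec.andSucc _ _ _ hr⟩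
  | seq e₁ e₂ ih₁ ih₂ =>
    intro x
    obtain ⟨r₁, hr₁⟩ := ih₁ x
    cases r₁ with
    | none => exact ⟨none, PegRec.seqFail₁ _ _ _ hr₁⟩
    | some y =>
      obtain ⟨z, hz⟩ := peg_prefix hr₁ y rfl
      subst hz
      obtain ⟨r₂, hr₂⟩ := ih₂ z
      cases r₂ with
      | none => exact ⟨none, PegRec.seqFail₂ _ _ _ _ hr₁ hr₂⟩
      | some y₂ => exact ⟨some (y ++ y₂), PegRec.seqOk _ _ _ _ _ hr₁ hr₂⟩
  | choice e₁ e₂ ih₁ ih₂ =>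
    intro x
    obtain ⟨r₁, hr₁⟩ := ih₁ x
    cases r₁ with
    | some y => exact ⟨some y, PegRec.choice₁ _ _ _ _ hr₁⟩
    | none =>
      obtain ⟨r₂, hr₂⟩ := ih₂ x
      exact ⟨r₂, PegRec.choice₂ _ _ _ _ hr₁ hr₂⟩

/-- the grammar -/
def G : PEG CSym where
  ν := N
  finNT := inferInstance
  R := Rules
  S := N.Sq

theorem G_total : G.Total := total_aux

theorem lang_iff (s : List CSym) : s ∈ G.Lang ↔ gS s = some [] := by
  constructor
  · intro h
    have hm := (master s).2.2.2.2
    cases hg : gS s with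
    | none =>
      rw [hg] at hm
      have := peg_det hm h
      simp at this
    | some z =>
      rw [hg] at hm
      obtain ⟨y, hyz, hy⟩ := hm
      have := peg_det hy h
      cases this
      have : z = [] := by
        have := congrArg List.length hyz
        simp at this
        simpa using this
      rw [this]
  · intro h
    have hm := (master s).2.2.2.2
    rw [h] at hm
    obtain ⟨y, hyz, hy⟩ := hm
    simp at hyz
    subst hyz
    exact hy
/-! ### Characterizations of the recognizers -/

theorem gT_mp : ∀ (x z : List CSym), gT x = some z →
    ∃ j, x = List.replicate j CSym.b0 ++ CSym.hash :: (List.replicate j CSym.b1 ++ z) := by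
  have key : ∀ (n : ℕ) (x z : List CSym), x.length < n → gT x = some z →
      ∃ j, x = List.replicate j CSym.b0 ++ CSym.hash :: (List.replicate j CSym.b1 ++ z) := by
    intro n
    induction n with
    | zero => intro x z h; omega
    | succ n ih =>
      intro x z hx h
      rw [gT_eq] at h
      rcases orE_eq_some h with h1 | ⟨_, h1⟩
      · rw [Option.bind_eq_some_iff] at h1
        obtain ⟨w, hw, h2⟩ := h1
        rw [Option.bind_eq_some_iff] at h2
        obtain ⟨u, hu, hz⟩ := h2
        rw [expect_some] at hw hz
        subst hw
        subst hz
        obtain ⟨j, hj⟩ := ih w (CSym.b1 :: z) (by simp at hx ⊢; omega) hu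
        refine ⟨j + 1, ?_⟩
        rw [hj, List.replicate_succ, List.replicate_succ']
        simp
      · rw [expect_some] at h1
        exact ⟨0, by simpa using h1⟩
  intro x z h
  exact key (x.length + 1) x z (by omega) h

theorem gT_mpr : ∀ (j : ℕ) (z : List CSym),
    gT (List.replicate j CSym.b0 ++ CSym.hash :: (List.replicate j CSym.b1 ++ z)) = some z := by
  intro j
  induction j with
  | zero =>
    intro z
    rw [gT_eq]
    simp [expect]
  | succ j ih =>
    intro z
    have hsplit : List.replicate (j+1) CSym.b1 ++ z
        = List.replicate j CSym.b1 ++ (CSym.b1 :: z) := by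
      rw [List.replicate_succ']; simp
    rw [hsplit, List.replicate_succ]
    simp only [List.cons_append]
    rw [gT_eq]
    simp [expect, ih (CSym.b1 :: z)]

/-- `gD` fails when the bits before the first `#` contain no `1` -/
theorem gD_none_run (j : ℕ) (ζ : List CSym) :
    gD (List.replicate j CSym.b0 ++ CSym.hash :: ζ) = none := by
  have key : ∀ (n : ℕ) (j : ℕ) (ζ : List CSym),
      (List.replicate j CSym.b0 ++ CSym.hash :: ζ).length < n →
      gD (List.replicate j CSym.b0 ++ CSym.hash :: ζ) = none := by
    intro n
    induction n with
    | zero => intro j ζ h; omega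
    | succ n ih =>
      intro j ζ hx
      rw [gD_eq]
      cases j with
      | zero => simp [expect]
      | succ j =>
        rw [List.replicate_succ]
        have h1 : expect CSym.b0 (CSym.b0 :: (List.replicate j CSym.b0 ++ CSym.hash :: ζ))
            = some (List.replicate j CSym.b0 ++ CSym.hash :: ζ) := by simp
        have h2 : expect CSym.b1 (CSym.b0 :: (List.replicate j CSym.b0 ++ CSym.hash :: ζ))
            = none := by simp [expect]
        simp only [List.cons_append, h1, h2]
        simp [h1, h2, ih j ζ (by simp at hx ⊢; omega)]
  exact key ((List.replicate j CSym.b0 ++ CSym.hash :: ζ).length + 1) j ζ (by omega)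

/-- the pattern matched by the nonterminal `D` -/
def dpat (v : List Bool) (j : ℕ) (z : List CSym) : List CSym :=
  enc v ++ CSym.b1 :: (List.replicate j CSym.b0 ++ CSym.hash ::
    (List.replicate j CSym.b1 ++ CSym.b0 :: (enc v.reverse ++ z)))

theorem dpat_cons (b : Bool) (v : List Bool) (j : ℕ) (z : List CSym) :
    dpat (b :: v) j z = bc b :: dpat v j (bc b :: z) := by
  simp [dpat, enc_cons, enc_append]

theorem gD_mp : ∀ (x z : List CSym), gD x = some z → ∃ v j, x = dpat v j z := by
  have key : ∀ (n : ℕ) (x z : List CSym), x.length < n → gD x = some z →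
      ∃ v j, x = dpat v j z := by
    intro n
    induction n with
    | zero => intro x z h; omega
    | succ n ih =>
      intro x z hx h
      rw [gD_eq] at h
      rcases orE_eq_some h with h1 | ⟨_, h1⟩
      · rw [Option.bind_eq_some_iff] at h1
        obtain ⟨w, hw, h2⟩ := h1
        rw [Option.bind_eq_some_iff] at h2
        obtain ⟨u, hu, hz⟩ := h2
        rw [expect_some] at hw hz
        subst hw; subst hz
        obtain ⟨v, j, hj⟩ := ih w (CSym.b0 :: z) (by simp at hx ⊢; omega) hu
        refine ⟨false :: v, j, ?_⟩
        rw [dpat_cons]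
        simp [hj]
      rcases orE_eq_some h1 with h2 | ⟨_, h2⟩
      · rw [Option.bind_eq_some_iff] at h2
        obtain ⟨w, hw, h3⟩ := h2
        rw [Option.bind_eq_some_iff] at h3
        obtain ⟨u, hu, hz⟩ := h3
        rw [expect_some] at hw hz
        subst hw; subst hz
        obtain ⟨v, j, hj⟩ := ih w (CSym.b1 :: z) (by simp at hx ⊢; omega) hu
        refine ⟨true :: v, j, ?_⟩
        rw [dpat_cons]
        simp [hj]
      · rw [Option.bind_eq_some_iff] at h2
        obtain ⟨w, hw, h3⟩ := h2
        rw [Option.bind_eq_some_iff] at h3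
        obtain ⟨u, hu, hz⟩ := h3
        rw [expect_some] at hw hz
        subst hw; subst hz
        obtain ⟨j, hj⟩ := gT_mp w (CSym.b0 :: z) hu
        refine ⟨[], j, ?_⟩
        simp [dpat, enc_nil, hj]
  intro x z h
  exact key (x.length + 1) x z (by omega) h

theorem gD_mpr : ∀ (v : List Bool) (j : ℕ) (z : List CSym), gD (dpat v j z) = some z := by
  intro v
  induction v with
  | nil =>
    intro j z
    rw [gD_eq]
    have hx : dpat [] j z = CSym.b1 ::
        (List.replicate j CSym.b0 ++ CSym.hash :: (List.replicate j CSym.b1 ++ CSym.b0 :: z)) := by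
      simp [dpat, enc_nil]
    rw [hx]
    have h0 : expect CSym.b0 (CSym.b1 :: (List.replicate j CSym.b0 ++ CSym.hash ::
        (List.replicate j CSym.b1 ++ CSym.b0 :: z))) = none := by simp [expect]
    have h1 : expect CSym.b1 (CSym.b1 :: (List.replicate j CSym.b0 ++ CSym.hash ::
        (List.replicate j CSym.b1 ++ CSym.b0 :: z))) = some
        (List.replicate j CSym.b0 ++ CSym.hash :: (List.replicate j CSym.b1 ++ CSym.b0 :: z)) := by
      simp
    rw [h0, h1]
    simp only [Option.bind_none, Option.bind_some, orE_none]
    rw [gD_none_run]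
    rw [gT_mpr j (CSym.b0 :: z)]
    simp [expect]
  | cons b v ih =>
    intro j z
    rw [dpat_cons]
    cases b
    · simp only [bc_false]
      rw [gD_eq]
      have h0 : expect CSym.b0 (CSym.b0 :: dpat v j (CSym.b0 :: z))
          = some (dpat v j (CSym.b0 :: z)) := by simp
      rw [h0]
      simp only [Option.bind_some]
      rw [ih j (CSym.b0 :: z)]
      simp [expect]
    · simp only [bc_true]
      rw [gD_eq]
      have h0 : expect CSym.b0 (CSym.b1 :: dpat v j (CSym.b1 :: z)) = none := by simp [expect]
      have h1 : expect CSym.b1 (CSym.b1 :: dpat v j (CSym.b1 :: z))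
          = some (dpat v j (CSym.b1 :: z)) := by simp
      rw [h0, h1]
      simp only [Option.bind_none, Option.bind_some, orE_none]
      rw [ih j (CSym.b1 :: z)]
      simp [expect]

/-- the pattern matched by the nonterminal `P` -/
def ppat (ρ : List Bool) (z : List CSym) : List CSym :=
  enc ρ ++ CSym.circ :: (enc ρ.reverse ++ z)

theorem ppat_cons (b : Bool) (ρ : List Bool) (z : List CSym) :
    ppat (b :: ρ) z = bc b :: ppat ρ (bc b :: z) := by
  simp [ppat, enc_cons, enc_append]

theorem gP_mp : ∀ (x z : List CSym), gP x = some z →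
    ∃ ρ, x = ppat ρ z ∧ (chk (enc ρ.reverse ++ z)).isSome := by
  have key : ∀ (n : ℕ) (x z : List CSym), x.length < n → gP x = some z →
      ∃ ρ, x = ppat ρ z ∧ (chk (enc ρ.reverse ++ z)).isSome := by
    intro n
    induction n with
    | zero => intro x z h; omega
    | succ n ih =>
      intro x z hx h
      rw [gP_eq] at h
      rcases orE_eq_some h with h1 | ⟨_, h1⟩
      · rw [Option.bind_eq_some_iff] at h1
        obtain ⟨w, hw, h2⟩ := h1
        rw [Option.bind_eq_some_iff] at h2
        obtain ⟨u, hu, hz⟩ := h2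
        rw [expect_some] at hw hz
        subst hw; subst hz
        obtain ⟨ρ, hρ, hc⟩ := ih w (CSym.b0 :: z) (by simp at hx ⊢; omega) hu
        refine ⟨false :: ρ, ?_, ?_⟩
        · rw [ppat_cons]; simp [hρ]
        · have : enc (false :: ρ).reverse ++ z = enc ρ.reverse ++ (CSym.b0 :: z) := by
            simp [enc_append, enc_cons]
          rw [this]
          exact hc
      rcases orE_eq_some h1 with h2 | ⟨_, h2⟩
      · rw [Option.bind_eq_some_iff] at h2
        obtain ⟨w, hw, h3⟩ := h2
        rw [Option.bind_eq_some_iff] at h3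
        obtain ⟨u, hu, hz⟩ := h3
        rw [expect_some] at hw hz
        subst hw; subst hz
        obtain ⟨ρ, hρ, hc⟩ := ih w (CSym.b1 :: z) (by simp at hx ⊢; omega) hu
        refine ⟨true :: ρ, ?_, ?_⟩
        · rw [ppat_cons]; simp [hρ]
        · have : enc (true :: ρ).reverse ++ z = enc ρ.reverse ++ (CSym.b1 :: z) := by
            simp [enc_append, enc_cons]
          rw [this]
          exact hc
      · rw [Option.bind_eq_some_iff] at h2
        obtain ⟨w, hw, h3⟩ := h2
        rw [expect_some] at hw
        subst hw
        split at h3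
        · next hcond =>
          cases h3
          exact ⟨[], by simp [ppat, enc_nil], by simpa [enc_nil] using hcond⟩
        · cases h3
  intro x z h
  exact key (x.length + 1) x z (by omega) h

theorem gP_mpr : ∀ (ρ : List Bool) (z : List CSym),
    (chk (enc ρ.reverse ++ z)).isSome → gP (ppat ρ z) = some z := by
  intro ρ
  induction ρ with
  | nil =>
    intro z hc
    rw [gP_eq]
    have hx : ppat [] z = CSym.circ :: z := by simp [ppat, enc_nil]
    rw [hx]
    have h0 : expect CSym.b0 (CSym.circ :: z) = none := by simp [expect]
    have h1 : expect CSym.b1 (CSym.circ :: z) = none := by simp [expect]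
    have h2 : expect CSym.circ (CSym.circ :: z) = some z := by simp
    rw [h0, h1, h2]
    simp only [Option.bind_none, Option.bind_some, orE_none]
    simp [enc_nil] at hc
    simp [hc]
  | cons b ρ ih =>
    intro z hc
    rw [ppat_cons]
    have hc' : (chk (enc ρ.reverse ++ (bc b :: z))).isSome := by
      have : enc (b :: ρ).reverse ++ z = enc ρ.reverse ++ (bc b :: z) := by
        simp [enc_append, enc_cons]
      rw [← this]
      exact hc
    cases b
    · simp only [bc_false] at hc' ⊢
      rw [gP_eq]
      have h0 : expect CSym.b0 (CSym.b0 :: ppat ρ (CSym.b0 :: z))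
          = some (ppat ρ (CSym.b0 :: z)) := by simp
      rw [h0]
      simp only [Option.bind_some]
      rw [ih (CSym.b0 :: z) hc']
      simp [expect]
    · simp only [bc_true] at hc' ⊢
      rw [gP_eq]
      have h0 : expect CSym.b0 (CSym.b1 :: ppat ρ (CSym.b1 :: z)) = none := by simp [expect]
      have h1 : expect CSym.b1 (CSym.b1 :: ppat ρ (CSym.b1 :: z))
          = some (ppat ρ (CSym.b1 :: z)) := by simp
      rw [h0, h1]
      simp only [Option.bind_none, Option.bind_some, orE_none]
      rw [ih (CSym.b1 :: z) hc']
      simp [expect]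
/-! ### The reversed counting language -/

def flat (n : ℕ) : List CSym := ((List.range (n + 1)).reverse.map countBlock).flatten

theorem flat_zero : flat 0 = [CSym.b0, CSym.circ, CSym.b0, CSym.hash] := by
  simp [flat, List.range_succ, countBlock, natBin, bitsToCSym]

theorem flat_succ (n : ℕ) : flat (n + 1) = countBlock (n + 1) ++ flat n := by
  simp [flat, List.range_succ]

theorem countBlock_eq (m : ℕ) (t : List CSym) :
    countBlock m ++ t
      = enc ((natBin m).reverse) ++ CSym.circ :: (enc (natBin m) ++ CSym.hash :: t) := by
  simp [countBlock]

theorem flat_decomp (m : ℕ) : ∃ t, flat m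
    = enc ((natBin m).reverse) ++ CSym.circ :: (enc (natBin m) ++ CSym.hash :: t) := by
  cases m with
  | zero =>
    refine ⟨[], ?_⟩
    have h : flat 0 = countBlock 0 ++ [] := by simp [flat, List.range_succ]
    rw [h, countBlock_eq]
  | succ m => exact ⟨flat m, by rw [flat_succ, countBlock_eq]⟩

theorem countBlock_len (m : ℕ) : 4 ≤ (countBlock m).length := by
  have h := natBin_ne_nil m
  have h1 : 1 ≤ (natBin m).length := by
    cases hn : natBin m
    · exact absurd hn h
    · simp
  simp [countBlock, bitsToCSym]
  omega

theorem flat_len (m : ℕ) : 4 ≤ (flat m).length := by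
  obtain ⟨t, ht⟩ := flat_decomp m
  have := countBlock_len m
  cases m with
  | zero => simp [flat_zero]
  | succ m =>
    rw [flat_succ]
    simp
    omega

theorem gAny_cons (c : CSym) (t : List CSym) : (gAny (c :: t)).isSome := by
  cases c <;> simp [gAny, expect]

theorem alt1_some {x z : List CSym}
    (h : ((expect CSym.b0 x).bind fun z => (expect CSym.circ z).bind fun z =>
          (expect CSym.b0 z).bind fun z => (expect CSym.hash z).bind fun z =>
          if (gAny z).isSome then none else some z) = some z) :
    x = [CSym.b0, CSym.circ, CSym.b0, CSym.hash] ∧ z = [] := by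
  rw [Option.bind_eq_some_iff] at h
  obtain ⟨a, ha, h⟩ := h
  rw [Option.bind_eq_some_iff] at h
  obtain ⟨b, hb, h⟩ := h
  rw [Option.bind_eq_some_iff] at h
  obtain ⟨c, hc, h⟩ := h
  rw [Option.bind_eq_some_iff] at h
  obtain ⟨d, hd, h⟩ := h
  rw [expect_some] at ha hb hc hd
  subst ha; subst hb; subst hc; subst hd
  split at h
  · cases h
  · next hcond =>
    injection h with h
    subst h
    cases d with
    | nil => exact ⟨rfl, rfl⟩
    | cons e t => exact absurd (gAny_cons e t) hcond

/-! ### Soundness -/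

theorem gS_sound : ∀ (x : List CSym), gS x = some [] → ∃ n, x = flat n := by
  have key : ∀ (k : ℕ) (x : List CSym), x.length < k → gS x = some [] → ∃ n, x = flat n := by
    intro k
    induction k with
    | zero => intro x h; omega
    | succ k ih =>
      intro x hx h
      rw [gS_eq] at h
      rcases orE_eq_some h with h1 | ⟨_, h1⟩
      · obtain ⟨hx4, _⟩ := alt1_some h1
        exact ⟨0, by rw [hx4, flat_zero]⟩
      · rw [Option.bind_eq_some_iff] at h1
        obtain ⟨w, hw, h2⟩ := h1
        rw [Option.bind_eq_some_iff] at h2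
        obtain ⟨z, hz, h3⟩ := h2
        rw [expect_some] at hz
        subst hz
        have hlz : z.length < k := by
          have := gP_len x _ hw
          simp at this
          omega
        obtain ⟨m, hm⟩ := ih z hlz h3
        subst hm
        obtain ⟨ρ, hρ, hc⟩ := gP_mp x _ hw
        -- unpack the lookahead
        rw [Option.isSome_iff_exists] at hc
        obtain ⟨c0, hcc⟩ := hc
        rw [chk, Option.bind_eq_some_iff] at hcc
        obtain ⟨w1, h4, h5⟩ := hcc
        rw [expect_some] at h4
        rw [Option.bind_eq_some_iff] at h5
        obtain ⟨w2, h6, h7⟩ := h5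
        rw [expect_some] at h7
        subst h7
        -- ρ.reverse starts with a bit 1
        cases hρr : ρ.reverse with
        | nil =>
          exfalso
          rw [hρr] at h4
          simp at h4
        | cons b τ =>
          rw [hρr, enc_cons] at h4
          have hb : b = true := by
            cases b
            · exfalso; simp at h4
            · rfl
          subst hb
          simp only [bc_true, List.cons_append, List.cons.injEq] at h4
          obtain ⟨_, h4⟩ := h4
          subst h4
          -- three cases of gDD
          rw [gDD] at h6
          rcases orE_eq_some h6 with hA | ⟨_, hBC⟩
          · -- case A : main decrement pattern
            rw [Option.bind_eq_some_iff] at hA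
            obtain ⟨q, hq, hqe⟩ := hA
            rw [expect_some] at hqe
            subst hqe
            obtain ⟨v, j, hd⟩ := gD_mp _ _ hq
            have hd' : enc τ ++ CSym.hash :: flat m
                = enc (v ++ true :: List.replicate j false) ++ CSym.hash ::
                  (enc (List.replicate j true ++ false :: (v.reverse ++ [true]))
                    ++ CSym.circ :: c0) := by
              rw [hd]
              simp [dpat, enc_append, enc_cons, enc_replicate_false, enc_replicate_true]
            obtain ⟨hτ, hfm⟩ := enc_sep_split CSym.hash (Or.inr rfl) _ _ _ _ hd'
            obtain ⟨t, hft⟩ := flat_decomp m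
            rw [hft] at hfm
            obtain ⟨hnb, _⟩ := enc_sep_split CSym.circ (Or.inl rfl) _ _ _ _ hfm
            -- hnb : (natBin m).reverse = replicate j true ++ false :: (v.reverse ++ [true])
            have hm0 : m ≠ 0 := by
              intro h0
              rw [h0, natBin_zero] at hnb
              have := congrArg List.length hnb
              simp at this
              omega
            have hbits : m.bits = List.replicate j true ++ false :: (v.reverse ++ [true]) := by
              have : natBin m = m.bits.reverse := by simp [natBin, hm0]
              rw [← hnb, this, List.reverse_reverse]
            have hsucc := inc_bits m j _ hbits
            have hnb1 : natBin (m + 1) = ρ.reverse := by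
              rw [natBin_succ, hsucc, hρr, hτ]
              simp [List.reverse_append]
            refine ⟨m + 1, ?_⟩
            rw [hρ, flat_succ, countBlock_eq, ppat]
            rw [show ρ = (natBin (m+1)).reverse by rw [hnb1, List.reverse_reverse]]
            rw [List.reverse_reverse, hnb1, List.reverse_reverse]
          rcases orE_eq_some hBC with hB | ⟨_, hC⟩
          · -- case B : the block for 1
            rw [Option.bind_eq_some_iff] at hB
            obtain ⟨q, hq, hqe⟩ := hB
            rw [expect_some] at hqe
            subst hqe
            obtain ⟨j, hd⟩ := gT_mp _ _ hq
            have hd' : enc τ ++ CSym.hash :: flat m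
                = enc (List.replicate j false) ++ CSym.hash ::
                  (enc (List.replicate j true ++ [false]) ++ CSym.circ :: c0) := by
              rw [hd]
              simp [enc_append, enc_cons, enc_replicate_false, enc_replicate_true]
            obtain ⟨hτ, hfm⟩ := enc_sep_split CSym.hash (Or.inr rfl) _ _ _ _ hd'
            obtain ⟨t, hft⟩ := flat_decomp m
            rw [hft] at hfm
            obtain ⟨hnb, _⟩ := enc_sep_split CSym.circ (Or.inl rfl) _ _ _ _ hfm
            have hnb' : natBin m = false :: List.replicate j true := by
              have := congrArg List.reverse hnb
              simpa [List.reverse_append] using this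
            obtain ⟨hm0, hj⟩ := natBin_false_cons m _ hnb'
            have hj0 : j = 0 := by
              cases j
              · rfl
              · exfalso; simp [List.replicate_succ] at hj
            subst hj0
            subst hm0
            have hτ' : τ = [] := by simpa using hτ
            refine ⟨1, ?_⟩
            rw [hρ, flat_succ, countBlock_eq, ppat]
            have hρval : ρ = [true] := by
              have := congrArg List.reverse hρr
              rw [List.reverse_reverse] at this
              rw [this, hτ']
              simp
            have hnb1 : natBin 1 = [true] := by
              simp [natBin, Nat.one_bits]
            rw [hρval, hnb1]
            simp [enc_cons]
          · -- case C : power-of-two block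
            obtain ⟨j, hd⟩ := gT_mp _ _ hC
            have hd' : enc τ ++ CSym.hash :: flat m
                = enc (List.replicate j false) ++ CSym.hash ::
                  (enc (List.replicate j true) ++ CSym.circ :: c0) := by
              rw [hd]
              simp [enc_append, enc_cons, enc_replicate_false, enc_replicate_true]
            obtain ⟨hτ, hfm⟩ := enc_sep_split CSym.hash (Or.inr rfl) _ _ _ _ hd'
            obtain ⟨t, hft⟩ := flat_decomp m
            rw [hft] at hfm
            obtain ⟨hnb, _⟩ := enc_sep_split CSym.circ (Or.inl rfl) _ _ _ _ hfm
            have hnb' : natBin m = List.replicate j true := by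
              have := congrArg List.reverse hnb
              simpa using this
            have hm0 : m ≠ 0 := by
              intro h0
              rw [h0, natBin_zero] at hnb'
              have : false ∈ List.replicate j true := by rw [← hnb']; simp
              have := List.eq_of_mem_replicate this
              simp at this
            have hbits : m.bits = List.replicate j true := by
              have : natBin m = m.bits.reverse := by simp [natBin, hm0]
              rw [this] at hnb'
              rw [← List.reverse_reverse m.bits, hnb']
              simp
            have hsucc := inc_bits_pow m j hbits
            have hnb1 : natBin (m + 1) = ρ.reverse := by
              rw [natBin_succ, hsucc, hρr, hτ]
              simp [List.reverse_append]
            refine ⟨m + 1, ?_⟩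
            rw [hρ, flat_succ, countBlock_eq, ppat]
            rw [show ρ = (natBin (m+1)).reverse by rw [hnb1, List.reverse_reverse]]
            rw [List.reverse_reverse, hnb1, List.reverse_reverse]
  intro x h
  exact key (x.length + 1) x (by omega) h
/-! ### Completeness -/

theorem chk_flat (n : ℕ) : (chk (enc (natBin (n + 1)) ++ CSym.hash :: flat n)).isSome := by
  have h1 : true ∈ (n + 1).bits := true_mem_bits _ (by omega)
  obtain ⟨j, ξ, hdec⟩ := first_true_decomp _ h1
  have hnb : natBin (n + 1) = ξ.reverse ++ true :: List.replicate j false := by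
    rw [natBin_succ, hdec]
    simp [List.reverse_append]
  by_cases hξ : ξ = []
  · subst hξ
    simp only [List.reverse_nil, List.nil_append] at hnb
    have hbitsn : n.bits = List.replicate j true :=
      dec_bits_pow n j (by simpa using hdec)
    by_cases hn0 : n = 0
    · subst hn0
      have hj0 : j = 0 := by
        rw [Nat.zero_bits] at hbitsn
        cases j
        · rfl
        · exfalso; simp [List.replicate_succ] at hbitsn
      subst hj0
      rw [show natBin 1 = [true] by simp [natBin, Nat.one_bits], flat_zero]
      have e1 : gD [CSym.hash, CSym.b0, CSym.circ, CSym.b0, CSym.hash] = none := by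
        rw [gD_eq]; simp [expect]
      have e2 : gT [CSym.hash, CSym.b0, CSym.circ, CSym.b0, CSym.hash]
          = some [CSym.b0, CSym.circ, CSym.b0, CSym.hash] := by
        rw [gT_eq]; simp [expect]
      simp [chk, gDD, e1, e2, expect, enc_cons]
    · have hnbn : natBin n = List.replicate j true := by
        simp [natBin, hn0, hbitsn]
      obtain ⟨t, hft⟩ := flat_decomp n
      rw [hnbn] at hft
      simp only [List.reverse_replicate, enc_replicate_true] at hft
      have hy : enc (natBin (n + 1)) ++ CSym.hash :: flat n
          = CSym.b1 :: (List.replicate j CSym.b0 ++ CSym.hash ::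
              (List.replicate j CSym.b1 ++ CSym.circ :: (enc (List.replicate j true) ++ CSym.hash :: t))) := by
        rw [hnb, hft]
        simp [enc_cons, enc_replicate_false, enc_replicate_true]
      rw [hy]
      have eD := gD_none_run j
        (List.replicate j CSym.b1 ++ CSym.circ :: (enc (List.replicate j true) ++ CSym.hash :: t))
      have eT := gT_mpr j (CSym.circ :: (enc (List.replicate j true) ++ CSym.hash :: t))
      simp [chk, gDD, eD, eT, expect]
  · have hends : ∃ v, ξ = v ++ [true] := by
      refine tail_ends_true (pre := List.replicate j false ++ [true]) ?_
        (bits_ends_true (n + 1) (by omega)) hξ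
      rw [hdec]; simp
    obtain ⟨v, hv⟩ := hends
    subst hv
    have hbitsn : n.bits = List.replicate j true ++ false :: (v ++ [true]) :=
      dec_bits n j (v ++ [true]) (by simp) (by simpa using hdec)
    have hn0 : n ≠ 0 := by
      intro h0
      rw [h0, Nat.zero_bits] at hbitsn
      have := congrArg List.length hbitsn
      simp at this
    have hnbn : natBin n = (List.replicate j true ++ false :: (v ++ [true])).reverse := by
      simp [natBin, hn0, hbitsn]
    obtain ⟨t, hft⟩ := flat_decomp n
    rw [hnbn, List.reverse_reverse] at hft
    have hy : enc (natBin (n + 1)) ++ CSym.hash :: flat n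
        = CSym.b1 :: dpat v.reverse j (CSym.b1 :: CSym.circ ::
            (enc (true :: (v.reverse ++ false :: List.replicate j true))
              ++ CSym.hash :: t)) := by
      rw [hnb, hft]
      simp [dpat, enc_append, enc_cons, enc_replicate_false, enc_replicate_true,
        List.reverse_append]
    rw [hy]
    have eD := gD_mpr v.reverse j (CSym.b1 :: CSym.circ ::
      (enc (true :: (v.reverse ++ false :: List.replicate j true)) ++ CSym.hash :: t))
    simp [chk, gDD, eD, expect]

theorem gS_flat : ∀ n : ℕ, gS (flat n) = some [] := by
  intro n
  induction n with
  | zero =>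
    rw [flat_zero, gS_eq]
    simp [expect, gAny]
  | succ n ih =>
    rw [gS_eq]
    have halt1 : ((expect CSym.b0 (flat (n+1))).bind fun z => (expect CSym.circ z).bind fun z =>
          (expect CSym.b0 z).bind fun z => (expect CSym.hash z).bind fun z =>
          if (gAny z).isSome then none else some z) = none := by
      cases hch : ((expect CSym.b0 (flat (n+1))).bind fun z => (expect CSym.circ z).bind fun z =>
          (expect CSym.b0 z).bind fun z => (expect CSym.hash z).bind fun z =>
          if (gAny z).isSome then none else some z) with
      | none => rfl
      | some z =>
        exfalso
        obtain ⟨h4, _⟩ := alt1_some hch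
        have hlen := congrArg List.length h4
        rw [flat_succ] at hlen
        have := countBlock_len (n + 1)
        have := flat_len n
        simp at hlen
        omega
    have hp : gP (flat (n + 1)) = some (CSym.hash :: flat n) := by
      rw [flat_succ]
      have hsh : countBlock (n+1) ++ flat n
          = ppat ((natBin (n+1)).reverse) (CSym.hash :: flat n) := by
        rw [countBlock_eq, ppat, List.reverse_reverse]
      rw [hsh]
      apply gP_mpr
      rw [List.reverse_reverse]
      exact chk_flat n
    rw [halt1]
    simp [hp, expect, ih]
end RCP

/-- The reversed counting language
`{ (n)₂ʳ∘(n)₂# (n−1)₂ʳ∘(n−1)₂# ⋯ # (0)₂ʳ∘(0)₂# : n ≥ 0 }` over `{0,1,#,∘}`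
is recognised by some total PEG. -/
theorem reversedCounting_isPEG :
    IsPEGLang { s : List CSym |
      ∃ n : ℕ, s = (((List.range (n + 1)).reverse.map countBlock)).flatten } := by
  refine ⟨RCP.G, RCP.G_total, ?_⟩
  ext s
  simp only [Set.mem_setOf_eq]
  constructor
  · intro h
    obtain ⟨n, hn⟩ := RCP.gS_sound s ((RCP.lang_iff s).mp h)
    exact ⟨n, by rw [hn]; rfl⟩
  · rintro ⟨n, rfl⟩
    exact (RCP.lang_iff _).mpr (RCP.gS_flat n)
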